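/- In the ring R := ℚ[x,y,z]/(x² + y² + z²), the image of x is a prime element. -/

import Mathlib

open MvPolynomial

noncomputable section Aux

/-- Base equiv `ℚ[x] ≃ ℚ[X]`. -/
def B2 : MvPolynomial (Fin 1) ℚ ≃+* Polynomial ℚ :=
  (finSuccEquiv ℚ 0).toRingEquiv.trans
    (Polynomial.mapEquiv (isEmptyAlgEquiv ℚ (Fin 0)).toRingEquiv)

def E2 : MvPolynomial (Fin 2) ℚ ≃+* Polynomial (Polynomial ℚ) :=
  (finSuccEquiv ℚ 1).toRingEquiv.trans (Polynomial.mapEquiv B2)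

lemma prime_target :
    Prime (Polynomial.X ^ 2 + Polynomial.C (Polynomial.X ^ 2) :
      Polynomial (Polynomial ℚ)) := by
  rw [← UniqueFactorizationMonoid.irreducible_iff_prime]
  have hmonic : (Polynomial.X ^ 2 + Polynomial.C (Polynomial.X ^ 2) :
      Polynomial (Polynomial ℚ)).Monic := Polynomial.monic_X_pow_add_C _ (by norm_num)
  have hdeg : (Polynomial.X ^ 2 + Polynomial.C (Polynomial.X ^ 2) :
      Polynomial (Polynomial ℚ)).natDegree = 2 := Polynomial.natDegree_X_pow_add_C
  rw [hmonic.irreducible_iff_roots_eq_zero_of_degree_le_three (by omega) (by omega)]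
  rw [Multiset.eq_zero_iff_forall_notMem]
  intro r hr
  rw [Polynomial.mem_roots hmonic.ne_zero, Polynomial.IsRoot] at hr
  simp only [Polynomial.eval_add, Polynomial.eval_pow, Polynomial.eval_X,
    Polynomial.eval_C] at hr
  -- hr : r ^ 2 + X ^ 2 = 0 in ℚ[X]
  have h2 : r ^ 2 = -(Polynomial.X ^ 2 : Polynomial ℚ) :=
    eq_neg_of_add_eq_zero_left hr
  have hlc := congrArg Polynomial.leadingCoeff h2
  rw [Polynomial.leadingCoeff_pow, Polynomial.leadingCoeff_neg,
    Polynomial.leadingCoeff_X_pow] at hlc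
  nlinarith [sq_nonneg r.leadingCoeff, hlc]

lemma prime_q' : Prime (X 0 ^ 2 + X 1 ^ 2 : MvPolynomial (Fin 2) ℚ) := by
  rw [← MulEquiv.prime_iff E2.toMulEquiv]
  have h1 : (1 : Fin 2) = Fin.succ 0 := rfl
  have : E2 (X 0 ^ 2 + X 1 ^ 2 : MvPolynomial (Fin 2) ℚ)
      = Polynomial.X ^ 2 + Polynomial.C (Polynomial.X ^ 2) := by
    simp only [E2, B2, RingEquiv.trans_apply, AlgEquiv.toRingEquiv_eq_coe,
      AlgEquiv.coe_ringEquiv, map_add, map_pow, h1,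
      finSuccEquiv_X_zero, finSuccEquiv_X_succ, Polynomial.mapEquiv_apply,
      Polynomial.map_add, Polynomial.map_pow, Polynomial.map_X, Polynomial.map_C]
    simp [finSuccEquiv_X_zero]
  show Prime (E2 (X 0 ^ 2 + X 1 ^ 2 : MvPolynomial (Fin 2) ℚ))
  rw [this]
  exact prime_target

end Aux

/-- In `ℚ[x,y,z]/(x² + y² + z²)` the image of `x` is a prime element. -/
theorem stmt_5 :
    Prime (Ideal.Quotient.mk
      (Ideal.span {(X 0 ^ 2 + X 1 ^ 2 + X 2 ^ 2 : MvPolynomial (Fin 3) ℚ)})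
      (X 0)) := by
  set p : MvPolynomial (Fin 3) ℚ := X 0 ^ 2 + X 1 ^ 2 + X 2 ^ 2 with hp
  set I : Ideal (MvPolynomial (Fin 3) ℚ) := Ideal.span {p} with hI
  -- the image of X 0 is nonzero
  have ha0 : Ideal.Quotient.mk I (X 0) ≠ 0 := by
    rw [Ne, Ideal.Quotient.eq_zero_iff_mem, hI, Ideal.mem_span_singleton]
    rintro ⟨g, hg⟩
    have h := congrArg (aeval ![(Polynomial.X : Polynomial ℚ), 0, 0]) hg
    simp only [hp, aeval_X, map_add, map_mul, map_pow, Matrix.cons_val_zero,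
      Matrix.cons_val_one, Matrix.head_cons] at h
    rw [show (![Polynomial.X, 0, 0] : Fin 3 → Polynomial ℚ) 2 = 0 from rfl] at h
    norm_num at h
    set c := (aeval ![(Polynomial.X : Polynomial ℚ), 0, 0]) g with hc
    by_cases hc0 : c = 0
    · rw [hc0, mul_zero] at h; exact Polynomial.X_ne_zero h
    · have := congrArg Polynomial.natDegree h
      rw [Polynomial.natDegree_X, Polynomial.natDegree_mul (pow_ne_zero 2 Polynomial.X_ne_zero) hc0,
        Polynomial.natDegree_X_pow] at this
      omega
  rw [← Ideal.span_singleton_prime ha0,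
    show Ideal.span {Ideal.Quotient.mk I (X 0)} =
      Ideal.map (Ideal.Quotient.mk I) (Ideal.span {X 0}) by
        rw [Ideal.map_span, Set.image_singleton],
    ← Ideal.Quotient.isDomain_iff_prime]
  set q' : MvPolynomial (Fin 2) ℚ := X 0 ^ 2 + X 1 ^ 2 with hq'
  set β : MvPolynomial (Fin 3) ℚ →ₐ[ℚ] MvPolynomial (Fin 2) ℚ :=
    aeval ![0, X 0, X 1] with hβ
  set ψ : MvPolynomial (Fin 3) ℚ →+* MvPolynomial (Fin 2) ℚ ⧸ Ideal.span {q'} :=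
    (Ideal.Quotient.mk (Ideal.span {q'})).comp β.toRingHom with hψ
  have hβ0 : β (X 0) = 0 := by rw [hβ, aeval_X]; rfl
  have hβ1 : β (X 1) = X 0 := by rw [hβ, aeval_X]; rfl
  have hβ2 : β (X 2) = X 1 := by rw [hβ, aeval_X]; rfl
  have hr1 : rename (![1, 2] : Fin 2 → Fin 3) (X 0 : MvPolynomial (Fin 2) ℚ) = X 1 := by
    rw [rename_X]; rfl
  have hr2 : rename (![1, 2] : Fin 2 → Fin 3) (X 1 : MvPolynomial (Fin 2) ℚ) = X 2 := by
    rw [rename_X]; rfl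
  -- β is surjective
  have hβsurj : Function.Surjective β := by
    intro u
    refine ⟨rename ![1, 2] u, ?_⟩
    rw [hβ, aeval_rename,
      show (![0, X 0, X 1] ∘ ![(1 : Fin 3), 2]) = (X : Fin 2 → MvPolynomial (Fin 2) ℚ) by
        funext i; fin_cases i <;> rfl]
    exact aeval_X_left_apply u
  have hψsurj : Function.Surjective ψ :=
    (Ideal.Quotient.mk_surjective).comp hβsurj
  -- every f is congruent to rename (β f) modulo (X 0)
  have hσ : ∀ f : MvPolynomial (Fin 3) ℚ,
      f - rename ![1, 2] (β f) ∈ Ideal.span {(X 0 : MvPolynomial (Fin 3) ℚ)} := by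
    intro f
    induction f using MvPolynomial.induction_on with
    | C a => simp [hβ]
    | add f g hf hg =>
        rw [map_add, map_add, add_sub_add_comm]
        exact Ideal.add_mem _ hf hg
    | mul_X f i hf =>
        rw [map_mul, map_mul]
        fin_cases i
        · rw [show X ((fun i => i) (⟨0, by omega⟩ : Fin 3)) = (X 0 : MvPolynomial (Fin 3) ℚ)
            from rfl, hβ0, map_zero, mul_zero, sub_zero]
          exact Ideal.mul_mem_left _ _ (Ideal.mem_span_singleton_self _)
        · rw [show X ((fun i => i) (⟨1, by omega⟩ : Fin 3)) = (X 1 : MvPolynomial (Fin 3) ℚ)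
            from rfl, hβ1, hr1, ← sub_mul]
          exact Ideal.mul_mem_right _ _ hf
        · rw [show X ((fun i => i) (⟨2, by omega⟩ : Fin 3)) = (X 2 : MvPolynomial (Fin 3) ℚ)
            from rfl, hβ2, hr2, ← sub_mul]
          exact Ideal.mul_mem_right _ _ hf
  -- kernel of ψ
  have hker : RingHom.ker ψ = I ⊔ Ideal.span {(X 0 : MvPolynomial (Fin 3) ℚ)} := by
    apply le_antisymm
    · intro f hf
      rw [RingHom.mem_ker, hψ, RingHom.comp_apply,
        Ideal.Quotient.eq_zero_iff_mem, Ideal.mem_span_singleton] at hf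
      obtain ⟨h, hh⟩ := hf
      have hh' : β f = q' * h := hh
      have hmem : rename (![1, 2] : Fin 2 → Fin 3) (β f)
          ∈ Ideal.span {(X 1 ^ 2 + X 2 ^ 2 : MvPolynomial (Fin 3) ℚ)} := by
        rw [hh', map_mul]
        refine Ideal.mul_mem_right _ _ ?_
        rw [show rename (![1, 2] : Fin 2 → Fin 3) q' = X 1 ^ 2 + X 2 ^ 2 by
          rw [hq', map_add, map_pow, map_pow, hr1, hr2]]
        exact Ideal.mem_span_singleton_self _
      have hsub : Ideal.span {(X 1 ^ 2 + X 2 ^ 2 : MvPolynomial (Fin 3) ℚ)}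
          ≤ I ⊔ Ideal.span {(X 0 : MvPolynomial (Fin 3) ℚ)} := by
        rw [Ideal.span_le, Set.singleton_subset_iff]
        rw [show (X 1 ^ 2 + X 2 ^ 2 : MvPolynomial (Fin 3) ℚ) = p - X 0 * X 0 by
          rw [hp]; ring]
        exact Ideal.sub_mem _
          (Ideal.mem_sup_left (Ideal.mem_span_singleton_self _))
          (Ideal.mem_sup_right (Ideal.mul_mem_left _ _ (Ideal.mem_span_singleton_self _)))
      rw [show f = (f - rename ![1, 2] (β f)) + rename ![1, 2] (β f) by ring]
      exact Ideal.add_mem _ (Ideal.mem_sup_right (hσ f)) (hsub hmem)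
    · rw [sup_le_iff]
      constructor <;> rw [Ideal.span_le, Set.singleton_subset_iff] <;>
        rw [SetLike.mem_coe, RingHom.mem_ker, hψ, RingHom.comp_apply,
          Ideal.Quotient.eq_zero_iff_mem]
      · show β p ∈ Ideal.span {q'}
        rw [show β p = q' by
          rw [hp, hq', map_add, map_add, map_pow, map_pow, map_pow, hβ0, hβ1, hβ2]
          ring]
        exact Ideal.mem_span_singleton_self _
      · show β (X 0) ∈ Ideal.span {q'}
        rw [hβ0]
        exact Ideal.zero_mem _
  have hdom2 : IsDomain (MvPolynomial (Fin 2) ℚ ⧸ Ideal.span {q'}) :=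
    (Ideal.Quotient.isDomain_iff_prime _).mpr
      ((Ideal.span_singleton_prime prime_q'.ne_zero).mpr prime_q')
  have e :
      ((MvPolynomial (Fin 3) ℚ ⧸ I)
        ⧸ Ideal.map (Ideal.Quotient.mk I) (Ideal.span {(X 0 : MvPolynomial (Fin 3) ℚ)}))
      ≃+* (MvPolynomial (Fin 2) ℚ ⧸ Ideal.span {q'}) :=
    (DoubleQuot.quotQuotEquivQuotSup I (Ideal.span {X 0})).trans
      ((Ideal.quotEquivOfEq hker.symm).trans
        (RingHom.quotientKerEquivOfSurjective hψsurj))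
  exact e.toMulEquiv.isDomain _
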